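/- Let n ∈ ℕ, S = {0, 1, …, 2^n − 1}, and p ∈ (0,1]. Let P be the probability distribution on S×S×S given by P(x,y,z) = p·2^{−n}·[x = y = z] + (1−p)·2^{−2n}·[x = (y+z) mod 2^n] (i.e., with probability p set X uniform and Y = Z = X, and with probability 1−p set Y, Z independent uniform and X = (Y+Z) mod 2^n). Then I(X:Z|Y)_P ≥ (1−p)·n − h(p), where h(p) = −p log p − (1−p) log(1−p) is the binary entropy function. -/

import Mathlib

noncomputable section

namespace CIT

/-- A probability distribution on a finite set. -/
def IsDist {X : Type*} [Fintype X] (p : X → ℝ) : Prop :=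
  (∀ x, 0 ≤ p x) ∧ ∑ x, p x = 1

/-- Support inclusion `supp p ⊆ supp q`. -/
def suppLe {X : Type*} (p q : X → ℝ) : Prop := ∀ x, p x ≠ 0 → q x ≠ 0

open Classical in
/-- Relative entropy (base 2), with `0·log 0 = 0`, `+∞` if the support
condition fails. -/
def relEnt {X : Type*} [Fintype X] (p q : X → ℝ) : EReal :=
  if suppLe p q then ((∑ x, p x * Real.logb 2 (p x / q x) : ℝ) : EReal) else ⊤

open Classical in
/-- Max-relative entropy `D_max(p‖q) = log max_{x ∈ supp p} p(x)/q(x)`,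
`+∞` if the support condition fails. -/
def dMax {X : Type*} [Fintype X] (p q : X → ℝ) : EReal :=
  if suppLe p q then
    ((Real.logb 2 (sSup {r : ℝ | ∃ x, p x ≠ 0 ∧ r = p x / q x}) : ℝ) : EReal)
  else ⊤

open Classical in
/-- Rényi relative entropy of order `α` (base 2), with `D_1 := D` and `+∞`
when `α > 1` and the support condition fails. -/
def renyi {X : Type*} [Fintype X] (α : ℝ) (p q : X → ℝ) : EReal :=
  if α = 1 then relEnt p q
  else if 1 < α ∧ ¬ suppLe p q then ⊤
  else (((α - 1)⁻¹ * Real.logb 2 (∑ x, p x ^ α * q x ^ (1 - α)) : ℝ) : EReal)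

/-- The `XY`-marginal of a tripartite distribution. -/
def margXY {X Y Z : Type*} [Fintype Z] (P : X × Y × Z → ℝ) : X × Y → ℝ :=
  fun t => ∑ z, P (t.1, t.2, z)

/-- The `YZ`-marginal of a tripartite distribution. -/
def margYZ {X Y Z : Type*} [Fintype X] (P : X × Y × Z → ℝ) : Y × Z → ℝ :=
  fun t => ∑ x, P (x, t.1, t.2)

/-- The `Y`-marginal of a tripartite distribution. -/
def margY {X Y Z : Type*} [Fintype X] [Fintype Z] (P : X × Y × Z → ℝ) : Y → ℝ :=
  fun y => ∑ x, ∑ z, P (x, y, z)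

/-- Conditional mutual information
`I(X:Z|Y)_P = Σ P(x,y,z) log( P(x,y,z)·P_Y(y) / (P_XY(x,y)·P_YZ(y,z)) )`. -/
def cmi {X Y Z : Type*} [Fintype X] [Fintype Y] [Fintype Z] (P : X × Y × Z → ℝ) : ℝ :=
  ∑ s : X × Y × Z,
    P s * Real.logb 2 (P s * margY P s.2.1 / (margXY P (s.1, s.2.1) * margYZ P (s.2.1, s.2.2)))

/-- A classical channel from `Y` to `W`: a family of conditional distributions. -/
def IsChannel {Y W : Type*} [Fintype W] (R : Y → W → ℝ) : Prop :=
  ∀ y, (∀ w, 0 ≤ R y w) ∧ ∑ w, R y w = 1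

/-- Action `(id ⊗ R)` of a channel `R : Y → W` on a joint distribution on `X × Y`. -/
def applyChan {X Y W : Type*} [Fintype Y] (R : Y → W → ℝ) (P : X × Y → ℝ) : X × W → ℝ :=
  fun t => ∑ y, P (t.1, y) * R y t.2

/-- Action of a channel `R : Y → W` on a distribution on `Y`. -/
def chanOnDist {Y W : Type*} [Fintype Y] (R : Y → W → ℝ) (q : Y → ℝ) : W → ℝ :=
  fun w => ∑ y, q y * R y w

/-- Marginal channel `R_{Y→Y}(y'|y) = Σ_{z'} R(y',z'|y)`. -/
def margChan {Y Y' Z' : Type*} [Fintype Z'] (R : Y → Y' × Z' → ℝ) : Y → Y' → ℝ :=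
  fun y y' => ∑ z', R y (y', z')

end CIT



namespace CITAux

open Real Finset

variable {K : Type*} [Fintype K] [AddCommGroup K] [DecidableEq K]

/-- summand after marginal substitution -/
def F (a b u : ℝ) (x y z : K) : ℝ :=
  (a * (if x = y ∧ y = z then 1 else 0) + b * (if x = y + z then 1 else 0)) *
    Real.logb 2 ((a * (if x = y ∧ y = z then 1 else 0) + b * (if x = y + z then 1 else 0)) * u /
      ((a * (if x = y then 1 else 0) + b) * (a * (if y = z then 1 else 0) + b)))

lemma sum_one (c : K) (A C : ℝ) :
    ∑ z : K, (if z = c then A else C) = A + ((Fintype.card K : ℝ) - 1) * C := by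
  have hpt : ∀ z : K, (if z = c then A else C) = (if z = c then A - C else 0) + C := by
    intro z; by_cases h : z = c <;> simp [h]
  rw [Finset.sum_congr rfl fun z _ => hpt z, Finset.sum_add_distrib, Finset.sum_ite_eq',
    Finset.sum_const, Finset.card_univ]
  simp [nsmul_eq_mul]; ring

lemma sum_two (c d : K) (h : c ≠ d) (A B C : ℝ) :
    ∑ z : K, (if z = c then A else if z = d then B else C)
      = A + B + ((Fintype.card K : ℝ) - 2) * C := by
  have hpt : ∀ z : K, (if z = c then A else if z = d then B else C) =
      ((if z = c then A - C else 0) + (if z = d then B - C else 0)) + C := by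
    intro z
    by_cases h1 : z = c
    · simp [h1, h]
    · by_cases h2 : z = d
      · simp [h1, h2, Ne.symm h]
      · simp [h1, h2]
  rw [Finset.sum_congr rfl fun z _ => hpt z, Finset.sum_add_distrib, Finset.sum_add_distrib,
    Finset.sum_ite_eq', Finset.sum_ite_eq', Finset.sum_const, Finset.card_univ]
  simp [nsmul_eq_mul]; ring

lemma sum_x (a b u : ℝ) (y z : K) :
    ∑ x : K, F a b u x y z =
      if y = z then
        (if y = 0 then (a + b) * Real.logb 2 ((a + b) * u / ((a + b) * (a + b)))
         else a * Real.logb 2 (a * u / ((a + b) * (a + b)))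
              + b * Real.logb 2 (b * u / (b * (a + b))))
      else
        (if z = 0 then b * Real.logb 2 (b * u / ((a + b) * b))
         else b * Real.logb 2 (b * u / (b * b))) := by
  by_cases hyz : y = z
  · subst hyz
    by_cases hy0 : y = 0
    · subst hy0
      rw [if_pos rfl, if_pos rfl, Finset.sum_eq_single_of_mem 0 (Finset.mem_univ _)]
      · simp [F]
      · intro x _ hx; simp [F, hx]
    · rw [if_pos rfl, if_neg hy0]
      have hne : y + y ≠ y := fun h => hy0 (add_eq_right.mp h)
      have hne' : y ≠ y + y := fun h => hne h.symm
      have hpt : ∀ x : K, F a b u x y y =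
          (if x = y then a * Real.logb 2 (a * u / ((a + b) * (a + b))) else 0)
          + (if x = y + y then b * Real.logb 2 (b * u / (b * (a + b))) else 0) := by
        intro x
        by_cases h1 : x = y
        · simp [F, h1, hne']
        · by_cases h2 : x = y + y
          · simp [F, h1, h2, hne]
          · simp [F, h1, h2]
      rw [Finset.sum_congr rfl fun x _ => hpt x, Finset.sum_add_distrib,
        Finset.sum_ite_eq', Finset.sum_ite_eq']
      simp
  · rw [if_neg hyz]
    rw [Finset.sum_eq_single_of_mem (y + z) (Finset.mem_univ _)]
    · by_cases hz0 : z = 0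
      · subst hz0
        rw [if_pos rfl]
        simp [F, hyz, add_zero]
      · rw [if_neg hz0]
        have h2 : y + z ≠ y := fun h => hz0 (add_eq_left.mp h)
        simp [F, hyz, h2]
    · intro x _ hx
      simp [F, hyz, hx]

lemma sum_zx (a b u : ℝ) (y : K) :
    ∑ z : K, ∑ x : K, F a b u x y z =
      if y = 0 then
        (a + b) * Real.logb 2 ((a + b) * u / ((a + b) * (a + b)))
          + ((Fintype.card K : ℝ) - 1) * (b * Real.logb 2 (b * u / (b * b)))
      else
        a * Real.logb 2 (a * u / ((a + b) * (a + b)))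
          + b * Real.logb 2 (b * u / (b * (a + b)))
          + b * Real.logb 2 (b * u / ((a + b) * b))
          + ((Fintype.card K : ℝ) - 2) * (b * Real.logb 2 (b * u / (b * b))) := by
  rw [Finset.sum_congr rfl fun z _ => sum_x a b u y z]
  by_cases hy0 : y = 0
  · subst hy0
    have hpt : ∀ z : K, (if (0 : K) = z then
        (if (0 : K) = 0 then (a + b) * Real.logb 2 ((a + b) * u / ((a + b) * (a + b)))
         else a * Real.logb 2 (a * u / ((a + b) * (a + b)))
              + b * Real.logb 2 (b * u / (b * (a + b))))
      else
        (if z = 0 then b * Real.logb 2 (b * u / ((a + b) * b))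
         else b * Real.logb 2 (b * u / (b * b)))) =
        (if z = (0 : K) then (a + b) * Real.logb 2 ((a + b) * u / ((a + b) * (a + b)))
         else b * Real.logb 2 (b * u / (b * b))) := by
      intro z
      by_cases hz : z = 0
      · simp [hz]
      · have : ¬ ((0 : K) = z) := fun h => hz h.symm
        simp [hz, this]
    rw [Finset.sum_congr rfl fun z _ => hpt z, sum_one, if_pos rfl]
  · have hpt : ∀ z : K, (if y = z then
        (if y = 0 then (a + b) * Real.logb 2 ((a + b) * u / ((a + b) * (a + b)))
         else a * Real.logb 2 (a * u / ((a + b) * (a + b)))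
              + b * Real.logb 2 (b * u / (b * (a + b))))
      else
        (if z = 0 then b * Real.logb 2 (b * u / ((a + b) * b))
         else b * Real.logb 2 (b * u / (b * b)))) =
        (if z = y then a * Real.logb 2 (a * u / ((a + b) * (a + b)))
              + b * Real.logb 2 (b * u / (b * (a + b)))
         else if z = 0 then b * Real.logb 2 (b * u / ((a + b) * b))
         else b * Real.logb 2 (b * u / (b * b))) := by
      intro z
      by_cases hz : z = y
      · simp [hz, hy0]
      · have : ¬ (y = z) := fun h => hz h.symm
        simp [hz, this]
    rw [Finset.sum_congr rfl fun z _ => hpt z, sum_two y 0 hy0, if_neg hy0]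

lemma big_sum (a b u : ℝ) :
    ∑ y : K, ∑ z : K, ∑ x : K, F a b u x y z =
      (a + b) * Real.logb 2 ((a + b) * u / ((a + b) * (a + b)))
      + ((Fintype.card K : ℝ) - 1) * (a * Real.logb 2 (a * u / ((a + b) * (a + b))))
      + ((Fintype.card K : ℝ) - 1) * (b * Real.logb 2 (b * u / (b * (a + b))))
      + ((Fintype.card K : ℝ) - 1) * (b * Real.logb 2 (b * u / ((a + b) * b)))
      + ((Fintype.card K : ℝ) - 1) ^ 2 * (b * Real.logb 2 (b * u / (b * b))) := by
  rw [Finset.sum_congr rfl fun y _ => sum_zx a b u y, sum_one]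
  ring

end CITAux

namespace CITAux

variable {K : Type*} [Fintype K] [AddCommGroup K] [DecidableEq K]

def EE (NN a b u : ℝ) : ℝ :=
  (a + b) * Real.logb 2 ((a + b) * u / ((a + b) * (a + b)))
  + (NN - 1) * (a * Real.logb 2 (a * u / ((a + b) * (a + b))))
  + (NN - 1) * (b * Real.logb 2 (b * u / (b * (a + b))))
  + (NN - 1) * (b * Real.logb 2 (b * u / ((a + b) * b)))
  + (NN - 1) ^ 2 * (b * Real.logb 2 (b * u / (b * b)))

lemma sum_chi_add (x y : K) :
    ∑ z : K, (if x = y + z then (1:ℝ) else 0) = 1 := by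
  have h : ∀ z : K, (if x = y + z then (1:ℝ) else 0) = (if z = x - y then 1 else 0) := by
    intro z
    have hiff : x = y + z ↔ z = x - y := by constructor <;> intro h <;> simp [h]
    simp [hiff]
  rw [Finset.sum_congr rfl (fun z _ => h z), Finset.sum_ite_eq']
  simp

lemma sum_chi_fst (c : K) : ∑ x : K, (if x = c then (1:ℝ) else 0) = 1 := by simp

lemma sum_chi_diag (x y : K) :
    ∑ z : K, (if x = y ∧ y = z then (1:ℝ) else 0) = if x = y then 1 else 0 := by
  by_cases h : x = y <;> simp [h]

lemma sum_chi_diag' (y z : K) :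
    ∑ x : K, (if x = y ∧ y = z then (1:ℝ) else 0) = if y = z then 1 else 0 := by
  by_cases h : y = z <;> simp [h]

lemma cmi_eq (n : ℕ) (p : ℝ)
    (P : Fin (2 ^ n) × Fin (2 ^ n) × Fin (2 ^ n) → ℝ)
    (hP : P = fun s =>
      p * ((2 ^ n : ℕ) : ℝ)⁻¹ * (if s.1 = s.2.1 ∧ s.2.1 = s.2.2 then 1 else 0) +
        (1 - p) * (((2 ^ n : ℕ) : ℝ)⁻¹) ^ 2 *
          (if s.1.val = (s.2.1.val + s.2.2.val) % 2 ^ n then 1 else 0)) :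
    CIT.cmi P = EE ((2^n : ℕ) : ℝ) (p * ((2^n : ℕ) : ℝ)⁻¹)
      ((1 - p) * (((2^n : ℕ) : ℝ)⁻¹)^2) (((2^n : ℕ) : ℝ)⁻¹) := by
  haveI : NeZero (2^n) := ⟨by positivity⟩
  set u : ℝ := ((2^n : ℕ) : ℝ)⁻¹ with hu
  set a : ℝ := p * u with haa
  set b : ℝ := (1-p) * u^2 with hbb
  have hNne : ((2^n : ℕ) : ℝ) ≠ 0 := by positivity
  have hind : ∀ x y z : Fin (2^n),
      (if (x : ℕ) = ((y : ℕ) + (z : ℕ)) % 2^n then (1:ℝ) else 0)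
        = (if x = y + z then 1 else 0) := by
    intro x y z
    have h : ((x : ℕ) = ((y : ℕ) + (z : ℕ)) % 2^n) ↔ (x = y + z) := by
      rw [← Fin.val_add]
      exact (Fin.val_eq_val x (y+z))
    simp only [h]
  have hP' : ∀ x y z : Fin (2^n), P (x, y, z) =
      a * (if x = y ∧ y = z then 1 else 0) + b * (if x = y + z then 1 else 0) := by
    intro x y z
    simp only [hP]
    rw [hind]
  have hXY : ∀ x y, CIT.margXY P (x, y) = a * (if x = y then 1 else 0) + b := by
    intro x y
    unfold CIT.margXY
    simp only [hP']
    rw [Finset.sum_add_distrib, ← Finset.mul_sum, ← Finset.mul_sum,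
      sum_chi_diag, sum_chi_add, mul_one]
  have hYZ : ∀ y z, CIT.margYZ P (y, z) = a * (if y = z then 1 else 0) + b := by
    intro y z
    unfold CIT.margYZ
    simp only [hP']
    rw [Finset.sum_add_distrib, ← Finset.mul_sum, ← Finset.mul_sum,
      sum_chi_diag', sum_chi_fst, mul_one]
  have hY : ∀ y, CIT.margY P y = u := by
    intro y
    unfold CIT.margY
    simp only [hP']
    have h1 : ∀ x : Fin (2^n), ∑ z, (a * (if x = y ∧ y = z then (1:ℝ) else 0)
        + b * (if x = y + z then 1 else 0)) = a * (if x = y then 1 else 0) + b := by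
      intro x
      rw [Finset.sum_add_distrib, ← Finset.mul_sum, ← Finset.mul_sum,
        sum_chi_diag, sum_chi_add, mul_one]
    rw [Finset.sum_congr rfl fun x _ => h1 x, Finset.sum_add_distrib, ← Finset.mul_sum,
      sum_chi_fst, mul_one, Finset.sum_const, Finset.card_univ, Fintype.card_fin,
      nsmul_eq_mul, haa, hbb, hu]
    field_simp
    ring
  unfold CIT.cmi
  have hsum : ∀ s : Fin (2^n) × Fin (2^n) × Fin (2^n),
      P s * Real.logb 2 (P s * CIT.margY P s.2.1 /
        (CIT.margXY P (s.1, s.2.1) * CIT.margYZ P (s.2.1, s.2.2)))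
        = CITAux.F a b u s.1 s.2.1 s.2.2 := by
    intro s
    obtain ⟨x, y, z⟩ := s
    rw [hY, hXY, hYZ, hP' x y z]
    rfl
  rw [Finset.sum_congr rfl fun s _ => hsum s]
  rw [Fintype.sum_prod_type]
  rw [Finset.sum_congr rfl fun x _ => Fintype.sum_prod_type _]
  rw [Finset.sum_comm]
  rw [Finset.sum_congr rfl fun y _ => Finset.sum_comm]
  rw [CITAux.big_sum]
  unfold EE
  rw [Fintype.card_fin]

end CITAux

namespace CITAux

set_option maxHeartbeats 1000000 in
lemma partB (n : ℕ) (p : ℝ) (hp0 : 0 < p) (hp1 : p ≤ 1) :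
    (1 - p) * (n : ℝ) - (-(p * Real.logb 2 p) - (1 - p) * Real.logb 2 (1 - p)) ≤
      EE ((2^n : ℕ) : ℝ) (p * ((2^n : ℕ) : ℝ)⁻¹)
        ((1 - p) * (((2^n : ℕ) : ℝ)⁻¹)^2) (((2^n : ℕ) : ℝ)⁻¹) := by
  set NN : ℝ := ((2^n : ℕ) : ℝ) with hNN
  have hNN2 : NN = (2:ℝ)^n := by rw [hNN]; push_cast; ring
  have hN1 : 1 ≤ NN := by
    rw [hNN]; exact_mod_cast Nat.one_le_two_pow
  have hN0 : (0:ℝ) < NN := lt_of_lt_of_le one_pos hN1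
  have hlogNN : Real.logb 2 NN = (n : ℝ) := by
    rw [hNN2, Real.logb_pow, Real.logb_self_eq_one (by norm_num), mul_one]
  rcases eq_or_lt_of_le hp1 with hp1' | hp1'
  · -- p = 1
    subst hp1'
    have h1 : (NN⁻¹ : ℝ) ≠ 0 := by positivity
    unfold EE
    norm_num
    rw [div_self (by positivity : NN⁻¹ * NN⁻¹ ≠ 0), Real.logb_one]
    norm_num
  · -- p < 1
    have ht0 : 0 < 1 - p := by linarith
    set m : ℝ := p * NN + (1 - p) with hm
    have hm0 : (0:ℝ) < m := by nlinarith
    have hmN : m ≤ NN := by nlinarith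
    -- key concavity inequality
    have hconc := (Real.strictConcaveOn_negMulLog).concaveOn
    have h1 := hconc.2 (Set.mem_Ici.mpr (zero_le_one)) (Set.mem_Ici.mpr hN0.le)
      (by linarith : (0:ℝ) ≤ 1 - p) hp0.le (by ring : (1 - p) + p = 1)
    rw [smul_eq_mul, smul_eq_mul, smul_eq_mul, smul_eq_mul] at h1
    rw [show (1 - p) * 1 + p * NN = m by rw [hm]; ring] at h1
    simp only [Real.negMulLog, Real.log_one] at h1
    have hkeylog : m * Real.log m ≤ p * NN * Real.log NN := by nlinarith [h1]
    have hlog2 : (0:ℝ) < Real.log 2 := Real.log_pos (by norm_num)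
    have hkey : m * Real.logb 2 m ≤ p * NN * (n : ℝ) := by
      have hb1 : m * Real.logb 2 m = (m * Real.log m) / Real.log 2 := by
        rw [Real.logb]; ring
      have hb2 : p * NN * (n:ℝ) = (p * NN * Real.log NN) / Real.log 2 := by
        have hh : Real.log NN = (n:ℝ) * Real.log 2 := by rw [hNN2, Real.log_pow]
        rw [hh, mul_div_assoc, mul_div_cancel_right₀ _ hlog2.ne']
      rw [hb1, hb2]
      gcongr
    -- rewrite the log arguments
    have hNne : NN ≠ 0 := hN0.ne'
    have hbne : (1 - p) * (NN⁻¹)^2 ≠ 0 := by positivity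
    have habm : p * NN⁻¹ + (1 - p) * (NN⁻¹)^2 = m / NN^2 := by
      rw [hm]; field_simp
    have habne : p * NN⁻¹ + (1 - p) * (NN⁻¹)^2 ≠ 0 := by
      rw [habm]; positivity
    have e1 : (p * NN⁻¹ + (1 - p) * (NN⁻¹)^2) * NN⁻¹ /
        ((p * NN⁻¹ + (1 - p) * (NN⁻¹)^2) * (p * NN⁻¹ + (1 - p) * (NN⁻¹)^2)) = NN / m := by
      rw [habm]; field_simp
    have e2 : (p * NN⁻¹) * NN⁻¹ /
        ((p * NN⁻¹ + (1 - p) * (NN⁻¹)^2) * (p * NN⁻¹ + (1 - p) * (NN⁻¹)^2)) = p * NN^2 / m^2 := by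
      rw [habm]; field_simp
    have e3 : ((1 - p) * (NN⁻¹)^2) * NN⁻¹ /
        (((1 - p) * (NN⁻¹)^2) * (p * NN⁻¹ + (1 - p) * (NN⁻¹)^2)) = NN / m := by
      rw [habm]; field_simp
    have e3' : ((1 - p) * (NN⁻¹)^2) * NN⁻¹ /
        ((p * NN⁻¹ + (1 - p) * (NN⁻¹)^2) * ((1 - p) * (NN⁻¹)^2)) = NN / m := by
      rw [habm]; field_simp
    have e4 : ((1 - p) * (NN⁻¹)^2) * NN⁻¹ /
        (((1 - p) * (NN⁻¹)^2) * ((1 - p) * (NN⁻¹)^2)) = NN / (1 - p) := by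
      field_simp
    unfold EE
    rw [e1, e2, e3, e3', e4]
    have l1 : Real.logb 2 (NN / m) = (n:ℝ) - Real.logb 2 m := by
      rw [Real.logb_div hNne hm0.ne', hlogNN]
    have l2 : Real.logb 2 (p * NN^2 / m^2) = Real.logb 2 p + 2*(n:ℝ) - 2*Real.logb 2 m := by
      rw [Real.logb_div (by positivity) (by positivity), Real.logb_mul hp0.ne' (by positivity),
        Real.logb_pow, Real.logb_pow, hlogNN]
      push_cast; ring
    have l4 : Real.logb 2 (NN / (1 - p)) = (n:ℝ) - Real.logb 2 (1 - p) := by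
      rw [Real.logb_div hNne ht0.ne', hlogNN]
    rw [l1, l2, l4]
    set Lm := Real.logb 2 m with hLm
    set Lp := Real.logb 2 p with hLp
    set Lt := Real.logb 2 (1 - p) with hLt
    have hLp0 : Lp ≤ 0 := Real.logb_nonpos (by norm_num) hp0.le hp1
    have hLt0 : Lt ≤ 0 := Real.logb_nonpos (by norm_num) ht0.le (by linarith)
    rw [← sub_nonneg]
    have hpos : (0:ℝ) < NN^2 := by positivity
    rw [← mul_nonneg_iff_of_pos_left hpos]
    have hX : 0 ≤ (2*NN - 1) * (m*((n:ℝ) - Lm) - (1 - p)*(n:ℝ))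
        + NN*p*(-Lp) + ((NN - 1)^2 + NN^2)*((1 - p)*(-Lt)) := by
      have hmn : m*(n:ℝ) - (1 - p)*(n:ℝ) = p*NN*(n:ℝ) := by rw [hm]; ring
      have h1' : 0 ≤ m*((n:ℝ) - Lm) - (1 - p)*(n:ℝ) := by nlinarith [hkey, hmn]
      have h2' : 0 ≤ 2*NN - 1 := by linarith
      have h3' : 0 ≤ NN*p*(-Lp) := mul_nonneg (mul_nonneg hN0.le hp0.le) (by linarith)
      have h4' : 0 ≤ ((NN - 1)^2 + NN^2)*((1 - p)*(-Lt)) :=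
        mul_nonneg (by positivity) (mul_nonneg ht0.le (by linarith))
      nlinarith [mul_nonneg h2' h1']
    refine le_trans hX (le_of_eq ?_)
    rw [hm]
    field_simp
    ring

end CITAux

open CIT in
/-- for the distribution
`P(x,y,z) = p·2^{−n}·[x=y=z] + (1−p)·2^{−2n}·[x=(y+z) mod 2^n]` one has
`I(X:Z|Y)_P ≥ (1−p)n − h(p)`. -/
theorem cmi_lower_bound_mod_example (n : ℕ) (p : ℝ) (hp0 : 0 < p) (hp1 : p ≤ 1)
    (P : Fin (2 ^ n) × Fin (2 ^ n) × Fin (2 ^ n) → ℝ)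
    (hP : P = fun s =>
      p * ((2 ^ n : ℕ) : ℝ)⁻¹ * (if s.1 = s.2.1 ∧ s.2.1 = s.2.2 then 1 else 0) +
        (1 - p) * (((2 ^ n : ℕ) : ℝ)⁻¹) ^ 2 *
          (if s.1.val = (s.2.1.val + s.2.2.val) % 2 ^ n then 1 else 0)) :
    (1 - p) * (n : ℝ) - (-(p * Real.logb 2 p) - (1 - p) * Real.logb 2 (1 - p)) ≤ cmi P := by
  rw [CITAux.cmi_eq n p P hP]
  exact CITAux.partB n p hp0 hp1
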